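/- Let T : E_κ × E_κ × E_κ → ℝ have all entries positive and satisfy, for all a,a',b,b',c,c': T(a',b',c')·T(a,b',c)·T(a,b,c')·T(a',b,c) = T(a,b,c)·T(a,b',c')·T(a',b',c)·T(a',b,c'). Then T(a,b,c) = T(0,0,0)·T(a,b,0)·T(a,0,c)·T(0,b,c) / (T(a,0,0)·T(0,b,0)·T(0,0,c)) for all a,b,c. -/
import Mathlib

theorem stmt_3 (κ : ℕ) (T : Fin (κ+1) → Fin (κ+1) → Fin (κ+1) → ℝ)
    (hpos : ∀ a b c, 0 < T a b c)
    (hcond : ∀ a a' b b' c c',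
      T a' b' c' * T a b' c * T a b c' * T a' b c
        = T a b c * T a b' c' * T a' b' c * T a' b c') :
    ∀ a b c, T a b c =
      T 0 0 0 * T a b 0 * T a 0 c * T 0 b c / (T a 0 0 * T 0 b 0 * T 0 0 c) := by
  intro a b c
  have h := hcond a 0 b 0 c 0
  have h1 := hpos a 0 0
  have h2 := hpos 0 b 0
  have h3 := hpos 0 0 c
  rw [eq_div_iff (by positivity)]
  linear_combination -h
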